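/- Let d ≥ 1, let Γ be an additive sub-semigroup of ℕ^{d+1} that generates ℤ^{d+1} as a group, and let F : Γ → ℝ be subadditive and satisfy F(γ) ≥ C·|γ| for all γ ∈ Γ, for some real constant C. Let c : Δ(Γ)° → ℝ be the limit function c(α) = lim_{k→∞} F((m_k α_k, m_k)) / m_k. Then for every (β, m) ∈ Γ with m ≥ 1 such that α := β/m lies in Δ(Γ)°, one has c(α) = inf_{k ≥ 1} F(k·(β,m)) / (km), the sequence k ↦ F(k·(β,m))/(km) converges to c(α), and in particular c(α) ≤ F((β,m))/m. -/

import Mathlib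

open Filter Topology

/-- The image of a vector of natural numbers in `ℝ^n`. -/
def natVecR {n : ℕ} (γ : Fin n → ℕ) : Fin n → ℝ := fun i => (γ i : ℝ)

/-- `Σ(Γ)`: the closed convex cone generated by `Γ ⊆ ℕ^n` in `ℝ^n`, i.e. the topological
closure of the set of all finite nonnegative real linear combinations of elements of `Γ`. -/
def coneOf {n : ℕ} (Γ : Set (Fin n → ℕ)) : Set (Fin n → ℝ) :=
  closure { x | ∃ (k : ℕ) (c : Fin k → ℝ) (g : Fin k → (Fin n → ℕ)),
    (∀ i, 0 ≤ c i) ∧ (∀ i, g i ∈ Γ) ∧ x = ∑ i, c i • natVecR (g i) }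

/-- `Δ(Γ) = {x ∈ ℝ^d : (x,1) ∈ Σ(Γ)}`. -/
def deltaOf {d : ℕ} (Γ : Set (Fin (d+1) → ℕ)) : Set (Fin d → ℝ) :=
  { x | Fin.snoc x (1 : ℝ) ∈ coneOf Γ }

/-- For `(β, m) ∈ Γ` with `m ≥ 1` and `α = β/m` in the interior of `Δ(Γ)`, the Chebyshev
transform satisfies `c(α) = inf_{k ≥ 1} F(k·(β,m))/(km)`, the sequence
`k ↦ F(k·(β,m))/(km)` converges to `c(α)`, and in particular `c(α) ≤ F((β,m))/m`. -/
theorem chebyshev_inf (d : ℕ) (hd : 1 ≤ d) (Γ : Set (Fin (d+1) → ℕ))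
    (h0 : (0 : Fin (d+1) → ℕ) ∈ Γ)
    (hadd : ∀ x ∈ Γ, ∀ y ∈ Γ, x + y ∈ Γ)
    (hgen : AddSubgroup.closure
        ((fun γ : Fin (d+1) → ℕ => (fun i => (γ i : ℤ))) '' Γ) = ⊤)
    (F : (Fin (d+1) → ℕ) → ℝ) (C : ℝ)
    (hsub : ∀ x ∈ Γ, ∀ y ∈ Γ, F (x + y) ≤ F x + F y)
    (hlb : ∀ γ ∈ Γ, C * (∑ i, (γ i : ℝ)) ≤ F γ)
    (c : (Fin d → ℝ) → ℝ)
    (hc : ∀ α ∈ interior (deltaOf Γ),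
      ∀ (m : ℕ → ℕ) (β : ℕ → Fin d → ℕ),
        (∀ k, 0 < m k) →
        Tendsto (fun k => m k) atTop atTop →
        (∀ k, Fin.snoc (β k) (m k) ∈ Γ) →
        Tendsto (fun k => (fun i => (β k i : ℝ) / (m k : ℝ))) atTop (nhds α) →
        Tendsto (fun k => F (Fin.snoc (β k) (m k)) / (m k : ℝ)) atTop (nhds (c α))) :
    ∀ (β : Fin d → ℕ) (m : ℕ), 1 ≤ m → Fin.snoc β m ∈ Γ →
      (fun i => (β i : ℝ) / (m : ℝ)) ∈ interior (deltaOf Γ) →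
      (c (fun i => (β i : ℝ) / (m : ℝ)) =
          ⨅ k : ℕ, F ((k + 1) • Fin.snoc β m) / (((k : ℝ) + 1) * (m : ℝ))) ∧
      Tendsto (fun k : ℕ => F ((k + 1) • Fin.snoc β m) / (((k : ℝ) + 1) * (m : ℝ)))
        atTop (nhds (c (fun i => (β i : ℝ) / (m : ℝ)))) ∧
      c (fun i => (β i : ℝ) / (m : ℝ)) ≤ F (Fin.snoc β m) / (m : ℝ) := by
  intro β m hm hmem hα
  set g : Fin (d+1) → ℕ := Fin.snoc β m with hg
  set α : Fin d → ℝ := fun i => (β i : ℝ) / (m : ℝ) with hαdef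
  have hmpos : (0:ℝ) < m := by exact_mod_cast hm
  -- multiples stay in Γ
  have hsmem : ∀ n : ℕ, (n + 1) • g ∈ Γ := by
    intro n
    induction n with
    | zero => simpa using hmem
    | succ n ih =>
      have : (n + 1 + 1) • g = (n + 1) • g + g := succ_nsmul g (n+1)
      rw [this]
      exact hadd _ ih _ hmem
  -- subadditivity on multiples
  have hFle : ∀ n : ℕ, F ((n + 1) • g) ≤ ((n : ℝ) + 1) * F g := by
    intro n
    induction n with
    | zero => simp
    | succ n ih =>
      rw [succ_nsmul g (n+1)]
      have h2 := hsub _ (hsmem n) _ hmem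
      have h3 : ((n:ℝ)+1+1) * F g = ((n:ℝ)+1) * F g + F g := by ring
      push_cast
      linarith
  -- the sequence
  set a : ℕ → ℝ := fun k => F ((k + 1) • g) / (((k : ℝ) + 1) * (m : ℝ)) with ha
  -- snoc identity
  have hsnoc : ∀ n : ℕ, Fin.snoc (fun i => (n+1) * β i) ((n+1) * m) = (n + 1) • g := by
    intro n
    funext i
    refine Fin.lastCases ?_ (fun j => ?_) i
    · simp [hg, Fin.snoc_last]
    · simp [hg, Fin.snoc_castSucc]
  -- tendsto
  have htend : Tendsto a atTop (nhds (c α)) := by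
    have h := hc α hα (fun k => (k+1) * m) (fun k i => (k+1) * β i)
      (fun k => Nat.mul_pos (Nat.succ_pos k) hm)
      (tendsto_atTop_mono
        (fun k => le_trans (Nat.le_succ k) (Nat.le_mul_of_pos_right (k+1) hm))
        tendsto_id)
      (fun k => by rw [hsnoc k]; exact hsmem k)
      (by
        have : (fun k : ℕ => (fun i => (((k+1) * β i : ℕ) : ℝ) / (((k+1) * m : ℕ) : ℝ))) =
            fun _ : ℕ => α := by
          funext k i
          have hk : ((k:ℝ)+1) ≠ 0 := by positivity
          push_cast
          rw [mul_div_mul_left _ _ hk]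
        rw [this]
        exact tendsto_const_nhds)
    have heq : (fun k : ℕ => F (Fin.snoc (fun i => (k+1) * β i) ((k+1) * m)) / (((k+1) * m : ℕ) : ℝ)) = a := by
      funext k
      rw [hsnoc k]
      simp only [ha]
      push_cast
      ring_nf
    rwa [heq] at h
  -- c α ≤ a k for each k
  have hkey : ∀ k : ℕ, c α ≤ a k := by
    intro k
    have hsub2 : Tendsto (fun j : ℕ => a (j * (k+1) + k)) atTop (nhds (c α)) := by
      refine htend.comp ?_
      apply tendsto_atTop_mono (fun j => Nat.le_add_right j k |>.trans (by nlinarith [Nat.le_mul_of_pos_right j (Nat.succ_pos k)]))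
      exact tendsto_id
    refine le_of_tendsto hsub2 (Filter.Eventually.of_forall fun j => ?_)
    -- a (j*(k+1)+k) ≤ a k
    have hidx : (j * (k+1) + k) + 1 = (j+1) * (k+1) := by ring
    have hsm : ((j * (k+1) + k) + 1) • g = (j + 1) • ((k + 1) • g) := by
      rw [hidx, mul_smul]
    -- F ((j+1) • h) ≤ (j+1) * F h for h = (k+1)•g
    have hFh : ∀ n : ℕ, F ((n + 1) • ((k+1) • g)) ≤ ((n : ℝ) + 1) * F ((k+1) • g) := by
      intro n
      induction n with
      | zero => simp
      | succ n ih =>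
        rw [succ_nsmul ((k+1) • g) (n+1)]
        have hmem2 : (n+1) • ((k+1) • g) ∈ Γ := by
          rw [← mul_smul]
          have h4 : (n+1) * (k+1) = (n * (k+1) + k) + 1 := by ring
          rw [h4]; exact hsmem _
        have h2 := hsub _ hmem2 _ (hsmem k)
        have h3 : ((n:ℝ)+1+1) * F ((k+1) • g) = ((n:ℝ)+1) * F ((k+1) • g) + F ((k+1) • g) := by ring
        push_cast
        linarith
    have hF2 : F (((j * (k+1) + k) + 1) • g) ≤ ((j:ℝ)+1) * F ((k+1) • g) := by
      rw [hsm]; exact hFh j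
    show F (((j * (k+1) + k) + 1) • g) / ((((j * (k+1) + k : ℕ) : ℝ) + 1) * m) ≤ a k
    have hden : (((j * (k+1) + k : ℕ) : ℝ) + 1) = ((j:ℝ)+1) * ((k:ℝ)+1) := by
      push_cast; ring
    rw [hden]
    rw [div_le_div_iff₀ (by positivity) (by positivity)]
    have hj1 : (0:ℝ) < (j:ℝ)+1 := by positivity
    calc F (((j * (k+1) + k) + 1) • g) * (((k:ℝ)+1) * m)
        ≤ (((j:ℝ)+1) * F ((k+1) • g)) * (((k:ℝ)+1) * m) := by
          apply mul_le_mul_of_nonneg_right hF2 (by positivity)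
      _ = F ((k+1) • g) * (((j:ℝ)+1) * ((k:ℝ)+1) * m) := by ring
  have hbdd : BddBelow (Set.range a) := ⟨c α, by rintro x ⟨k, rfl⟩; exact hkey k⟩
  refine ⟨?_, htend, ?_⟩
  · refine le_antisymm (le_ciInf hkey) ?_
    exact ge_of_tendsto htend (Filter.Eventually.of_forall fun k => ciInf_le hbdd k)
  · have e1 : (0 + 1 : ℕ) • g = g := one_smul ℕ g
    have e2 : (((0:ℕ):ℝ) + 1) * (m:ℝ) = (m:ℝ) := by norm_num
    have h0' := hkey 0
    simp only [ha, e1, e2] at h0'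
    exact h0'
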